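/- There is a universal constant C > 0 with the following property. Let t₀ ∈ ℝ∖{0} and V₁, V_j ∈ ℝ, and set z₁ := t₀ − t₀·cos(V₁)·e^{2iV_j} ∈ ℂ and z₂ := −t₀·sin(V₁)·e^{2iV_j} ∈ ℂ (these are the quantities whose arguments define ℵ₁ and ℵ₂ in the special case t₂ = 0, t₁ = −t₀). If z₁ ≠ 0, z₂ ≠ 0 and sin(2V_j) ≠ 0, then, with |cos(ℵ₁ − ℵ₂)| = |Re(z₁·conj(z₂))| / (|z₁|·|z₂|), one has ( 1 − |cos(ℵ₁ − ℵ₂)| )^{−1/2} ≤ C·( 1/|sin(2V_j)| + 1 ); equivalently, 1 − |Re(z₁·conj(z₂))|/(|z₁|·|z₂|) ≥ sin²(2V_j) / ( C²·(1 + |sin(2V_j)|)² ). -/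

import Mathlib

lemma key_ratio (a b : ℝ) (hb : b ≠ 0) (ha : |a| ≤ 2) :
    b ^ 2 / (8 * (1 + |b|) ^ 2) ≤ 1 - |a| / Real.sqrt (a ^ 2 + b ^ 2) := by
  have hb2 : 0 < b ^ 2 := by positivity
  have hS2 : 0 < a ^ 2 + b ^ 2 := by positivity
  set S := Real.sqrt (a ^ 2 + b ^ 2) with hSdef
  have hS : 0 < S := Real.sqrt_pos.2 hS2
  have hSsq : S ^ 2 = a ^ 2 + b ^ 2 := Real.sq_sqrt hS2.le
  have haS : |a| ≤ S := by nlinarith [abs_nonneg a, sq_abs a]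
  have h1 : 1 - |a| / S = b ^ 2 / (S * (S + |a|)) := by
    have h2 : S + |a| ≠ 0 := by positivity
    field_simp
    nlinarith [sq_abs a]
  rw [h1]
  have hden : S * (S + |a|) ≤ 8 * (1 + |b|) ^ 2 := by
    nlinarith [abs_nonneg b, sq_abs b, sq_abs a, abs_nonneg a]
  exact div_le_div_of_nonneg_left hb2.le (by positivity) hden

lemma re_eq (t₀ c s c2 s2 : ℝ) (h : c2 ^ 2 + s2 ^ 2 = 1) :
    (((t₀ : ℂ) - (t₀ : ℂ) * (c : ℂ) * ((c2 : ℂ) + (s2 : ℂ) * Complex.I)) *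
      (starRingEnd ℂ) (-((t₀ : ℂ) * (s : ℂ)) * ((c2 : ℂ) + (s2 : ℂ) * Complex.I))).re
      = t₀ ^ 2 * s * (c - c2) := by
  have : (((t₀ : ℂ) - (t₀ : ℂ) * (c : ℂ) * ((c2 : ℂ) + (s2 : ℂ) * Complex.I)) *
      (starRingEnd ℂ) (-((t₀ : ℂ) * (s : ℂ)) * ((c2 : ℂ) + (s2 : ℂ) * Complex.I))).re
      = t₀ ^ 2 * s * (c * (c2 ^ 2 + s2 ^ 2) - c2) := by
    simp [Complex.ext_iff, Complex.mul_re, Complex.mul_im]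
    ring
  rw [this, h]; ring

lemma abs2_eq (t₀ s c2 s2 : ℝ) (h : c2 ^ 2 + s2 ^ 2 = 1) :
    ‖-((t₀ : ℂ) * (s : ℂ)) * ((c2 : ℂ) + (s2 : ℂ) * Complex.I)‖
      = |t₀| * |s| := by
  have : ‖-((t₀ : ℂ) * (s : ℂ)) * ((c2 : ℂ) + (s2 : ℂ) * Complex.I)‖
      = |t₀| * |s| * Real.sqrt (c2 ^ 2 + s2 ^ 2) := by
    rw [norm_mul]
    simp [Complex.norm_def, Complex.normSq_apply, ← sq, Real.sqrt_sq_eq_abs]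
  rw [this, h, Real.sqrt_one, mul_one]

lemma abs1_eq (t₀ c c2 s2 : ℝ) (h : c2 ^ 2 + s2 ^ 2 = 1) :
    ‖(t₀ : ℂ) - (t₀ : ℂ) * (c : ℂ) * ((c2 : ℂ) + (s2 : ℂ) * Complex.I)‖
      = |t₀| * Real.sqrt ((c - c2) ^ 2 + s2 ^ 2) := by
  have h1 : ‖(t₀ : ℂ) - (t₀ : ℂ) * (c : ℂ) * ((c2 : ℂ) + (s2 : ℂ) * Complex.I)‖
      = |t₀| * Real.sqrt ((1 - c * c2) ^ 2 + (c * s2) ^ 2) := by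
    rw [show ((t₀ : ℂ) - (t₀ : ℂ) * (c : ℂ) * ((c2 : ℂ) + (s2 : ℂ) * Complex.I))
        = (t₀ : ℂ) * (((1 - c * c2 : ℝ) : ℂ) + ((-(c * s2) : ℝ) : ℂ) * Complex.I) by
      push_cast; ring, norm_mul]
    simp [Complex.norm_def, Complex.normSq_apply, ← sq, Real.sqrt_sq_eq_abs]
  rw [h1, show (1 - c * c2) ^ 2 + (c * s2) ^ 2 = (c - c2) ^ 2 + s2 ^ 2 by linear_combination (c ^ 2 - 1) * h]


/-- There is a universal constant `C > 0` such that for all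
`t₀ ≠ 0` and `V₁, V_j ∈ ℝ`, with `z₁ = t₀ − t₀ cos(V₁) e^{2iV_j}` and
`z₂ = −t₀ sin(V₁) e^{2iV_j}`, if `z₁ ≠ 0`, `z₂ ≠ 0` and `sin(2V_j) ≠ 0` then, writing
`|cos(ℵ₁ − ℵ₂)| = |Re(z₁ conj(z₂))|/(|z₁||z₂|)`,
`(1 − |cos(ℵ₁ − ℵ₂)|)^{−1/2} ≤ C (1/|sin(2V_j)| + 1)`; equivalently,
`1 − |cos(ℵ₁ − ℵ₂)| ≥ sin²(2V_j)/(C² (1 + |sin(2V_j)|)²)`. -/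
theorem angle_lemma_special_case :
    ∃ C : ℝ, 0 < C ∧
      ∀ t₀ V₁ Vj : ℝ, t₀ ≠ 0 →
        let z₁ : ℂ := (t₀ : ℂ) -
          (t₀ : ℂ) * (Real.cos V₁ : ℂ) * Complex.exp (2 * Complex.I * (Vj : ℂ))
        let z₂ : ℂ :=
          -((t₀ : ℂ) * (Real.sin V₁ : ℂ)) * Complex.exp (2 * Complex.I * (Vj : ℂ))
        z₁ ≠ 0 → z₂ ≠ 0 → Real.sin (2 * Vj) ≠ 0 →
          (Real.sqrt (1 - |(z₁ * (starRingEnd ℂ) z₂).re| /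
              (‖z₁‖ * ‖z₂‖)))⁻¹ ≤
            C * (1 / |Real.sin (2 * Vj)| + 1) ∧
          Real.sin (2 * Vj) ^ 2 / (C ^ 2 * (1 + |Real.sin (2 * Vj)|) ^ 2) ≤
            1 - |(z₁ * (starRingEnd ℂ) z₂).re| /
              (‖z₁‖ * ‖z₂‖) := by
  refine ⟨3, by norm_num, ?_⟩
  intro t₀ V₁ Vj ht
  have he : Complex.exp (2 * Complex.I * (Vj : ℂ)) =
      ((Real.cos (2 * Vj) : ℝ) : ℂ) + ((Real.sin (2 * Vj) : ℝ) : ℂ) * Complex.I := by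
    rw [show (2 * Complex.I * (Vj : ℂ)) = ((2 * Vj : ℝ) : ℂ) * Complex.I by push_cast; ring,
      Complex.exp_mul_I, Complex.ofReal_cos, Complex.ofReal_sin]
  dsimp only
  rw [he]
  intro hz1 hz2 hb
  set c := Real.cos V₁ with hc
  set s := Real.sin V₁ with hs
  set c2 := Real.cos (2 * Vj) with hc2
  set b := Real.sin (2 * Vj) with hbdef
  have hpyth : c2 ^ 2 + b ^ 2 = 1 := by
    rw [hc2, hbdef, ← Real.sin_sq_add_cos_sq (2 * Vj)]; ring
  have hsne : s ≠ 0 := by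
    intro h
    apply hz2
    rw [h]
    simp
  -- ratio computation
  have hre := re_eq t₀ c s c2 b hpyth
  have habs1 := abs1_eq t₀ c c2 b hpyth
  have habs2 := abs2_eq t₀ s c2 b hpyth
  set a := c - c2 with ha
  have hS2 : (0:ℝ) < a ^ 2 + b ^ 2 := by positivity
  have hSpos : 0 < Real.sqrt (a ^ 2 + b ^ 2) := Real.sqrt_pos.2 hS2
  have hratio :
      |(((t₀ : ℂ) - (t₀ : ℂ) * (c : ℂ) * ((c2 : ℂ) + (b : ℂ) * Complex.I)) *
        (starRingEnd ℂ) (-((t₀ : ℂ) * (s : ℂ)) * ((c2 : ℂ) + (b : ℂ) * Complex.I))).re| /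
        (‖(t₀ : ℂ) - (t₀ : ℂ) * (c : ℂ) * ((c2 : ℂ) + (b : ℂ) * Complex.I)‖ *
         ‖-((t₀ : ℂ) * (s : ℂ)) * ((c2 : ℂ) + (b : ℂ) * Complex.I)‖)
      = |a| / Real.sqrt (a ^ 2 + b ^ 2) := by
    rw [hre, habs1, habs2, abs_mul, abs_mul, abs_of_nonneg (sq_nonneg t₀)]
    have h1 : |t₀| * |t₀| = t₀ ^ 2 := by rw [← abs_mul, ← sq, abs_of_nonneg (sq_nonneg t₀)]
    have ht' : |t₀| ≠ 0 := abs_ne_zero.2 ht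
    have hs' : |s| ≠ 0 := abs_ne_zero.2 hsne
    field_simp
    linear_combination (-|a|) * h1
  rw [hratio]
  have haa : |a| ≤ 2 := by
    have h1 : |c| ≤ 1 := by rw [hc]; exact Real.abs_cos_le_one V₁
    have h2 : |c2| ≤ 1 := by rw [hc2]; exact Real.abs_cos_le_one (2 * Vj)
    calc |a| ≤ |c| + |c2| := abs_sub c c2
      _ ≤ 2 := by linarith
  have hkey := key_ratio a b hb haa
  have hb0 : 0 < |b| := abs_pos.2 hb
  have h8 : b ^ 2 / (3 ^ 2 * (1 + |b|) ^ 2) ≤ b ^ 2 / (8 * (1 + |b|) ^ 2) := by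
    apply div_le_div_of_nonneg_left (by positivity) (by positivity)
    nlinarith [abs_nonneg b]
  have hG2 : b ^ 2 / (3 ^ 2 * (1 + |b|) ^ 2) ≤ 1 - |a| / Real.sqrt (a ^ 2 + b ^ 2) :=
    h8.trans hkey
  refine ⟨?_, hG2⟩
  -- first goal
  have hm : b ^ 2 / (3 ^ 2 * (1 + |b|) ^ 2) = (|b| / (3 * (1 + |b|))) ^ 2 := by
    rw [div_pow, sq_abs]; ring_nf
  have hmpos : 0 < |b| / (3 * (1 + |b|)) := by positivity
  have hsq : |b| / (3 * (1 + |b|)) ≤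
      Real.sqrt (1 - |a| / Real.sqrt (a ^ 2 + b ^ 2)) := by
    rw [show |b| / (3 * (1 + |b|)) =
        Real.sqrt ((|b| / (3 * (1 + |b|))) ^ 2) from (Real.sqrt_sq hmpos.le).symm]
    apply Real.sqrt_le_sqrt
    rw [← hm]
    exact hG2
  have hinv : (Real.sqrt (1 - |a| / Real.sqrt (a ^ 2 + b ^ 2)))⁻¹ ≤
      (|b| / (3 * (1 + |b|)))⁻¹ :=
    inv_anti₀ hmpos hsq
  refine hinv.trans ?_
  rw [inv_div]
  rw [div_le_iff₀ hb0]
  field_simp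
  exact le_refl 1
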